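/- In the local setting of the W-method (γ = sep(D̃⋆) > 0, η = ‖Y_W − Y⋆‖_F ≤ γ/4), let Ẽ⋆ and Ẽ_W be defined entrywise by ẽ⋆ᵢᵢ = 0, ẽ⋆ᵢⱼ = (Y⋆)ᵢⱼ/(d̃⋆ⱼ − d̃⋆ᵢ) and ẽ_Wᵢᵢ = 0, ẽ_Wᵢⱼ = (Y_W)ᵢⱼ/(d̃ⱼ − d̃ᵢ) for i ≠ j. Then ‖Ẽ_W − Ẽ⋆‖_F ≤ (2/γ + 4‖Y⋆‖_F/γ²) η. -/

import Mathlib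

set_option maxHeartbeats 1000000


open Matrix

noncomputable def frob {n : ℕ} (M : Matrix (Fin n) (Fin n) ℂ) : ℝ :=
  Real.sqrt (∑ i, ∑ j, ‖M i j‖ ^ 2)

lemma frob_nonneg' {n : ℕ} (M : Matrix (Fin n) (Fin n) ℂ) : 0 ≤ frob M :=
  Real.sqrt_nonneg _

lemma entry_le_frob {n : ℕ} (M : Matrix (Fin n) (Fin n) ℂ) (i j : Fin n) :
    ‖M i j‖ ≤ frob M := by
  have h1 : ‖M i j‖ ^ 2 ≤ ∑ a, ∑ b, ‖M a b‖ ^ 2 := by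
    have h2 : ‖M i j‖ ^ 2 ≤ ∑ b, ‖M i b‖ ^ 2 :=
      Finset.single_le_sum (f := fun b => ‖M i b‖ ^ 2) (fun b _ => sq_nonneg _)
        (Finset.mem_univ j)
    exact h2.trans (Finset.single_le_sum (f := fun a => ∑ b, ‖M a b‖ ^ 2)
      (fun a _ => Finset.sum_nonneg fun b _ => sq_nonneg _) (Finset.mem_univ i))
  calc ‖M i j‖ = Real.sqrt (‖M i j‖ ^ 2) := (Real.sqrt_sq (norm_nonneg _)).symm
    _ ≤ frob M := Real.sqrt_le_sqrt h1

lemma l2_comb {ι : Type*} [Fintype ι] (x u v : ι → ℝ) (a b : ℝ) (ha : 0 ≤ a) (hb : 0 ≤ b)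
    (h : ∀ i, |x i| ≤ a * |u i| + b * |v i|) :
    Real.sqrt (∑ i, x i ^ 2) ≤ a * Real.sqrt (∑ i, u i ^ 2) + b * Real.sqrt (∑ i, v i ^ 2) := by
  let U : EuclideanSpace ℝ ι := WithLp.toLp 2 (fun i => |u i|)
  let V : EuclideanSpace ℝ ι := WithLp.toLp 2 (fun i => |v i|)
  have hU : ‖U‖ = Real.sqrt (∑ i, u i ^ 2) := by
    rw [EuclideanSpace.norm_eq]
    congr 1
    exact Finset.sum_congr rfl fun i _ => by simp [U, sq_abs]
  have hV : ‖V‖ = Real.sqrt (∑ i, v i ^ 2) := by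
    rw [EuclideanSpace.norm_eq]
    congr 1
    exact Finset.sum_congr rfl fun i _ => by simp [V, sq_abs]
  have key : Real.sqrt (∑ i, x i ^ 2) ≤ ‖a • U + b • V‖ := by
    rw [EuclideanSpace.norm_eq]
    apply Real.sqrt_le_sqrt
    apply Finset.sum_le_sum
    intro i _
    have hentry : ‖(a • U + b • V) i‖ = a * |u i| + b * |v i| := by
      have h1 : (a • U + b • V) i = a * |u i| + b * |v i| := by simp [U, V]
      rw [h1, Real.norm_eq_abs, abs_of_nonneg]
      positivity
    rw [hentry]
    calc x i ^ 2 = |x i| ^ 2 := (sq_abs _).symm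
      _ ≤ (a * |u i| + b * |v i|) ^ 2 := by
          apply pow_le_pow_left₀ (abs_nonneg _) (h i)
  calc Real.sqrt (∑ i, x i ^ 2) ≤ ‖a • U + b • V‖ := key
    _ ≤ ‖a • U‖ + ‖b • V‖ := norm_add_le _ _
    _ = a * ‖U‖ + b * ‖V‖ := by
        rw [norm_smul, norm_smul, Real.norm_eq_abs, Real.norm_eq_abs,
          abs_of_nonneg ha, abs_of_nonneg hb]
    _ = a * Real.sqrt (∑ i, u i ^ 2) + b * Real.sqrt (∑ i, v i ^ 2) := by rw [hU, hV]

theorem W_method_correction_difference_bound {n : ℕ}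
    (A V W : Matrix (Fin n) (Fin n) ℂ) (hV : IsUnit V.det)
    (d : Fin n → ℂ)
    (R Ystar YW : Matrix (Fin n) (Fin n) ℂ)
    (hR : R = A * V - V * Matrix.diagonal d)
    (hYstar : Ystar = V⁻¹ * R)
    (hYW : YW = Wᴴ * R)
    (dstar dt : Fin n → ℂ)
    (hdstar : ∀ i, dstar i = d i + Ystar i i)
    (hdt : ∀ i, dt i = d i + YW i i)
    (γ η : ℝ) (hγpos : 0 < γ)
    (hγ : ∀ i j, i ≠ j → γ ≤ ‖dstar i - dstar j‖)
    (hη : η = frob (YW - Ystar))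
    (hloc : η ≤ γ / 4)
    (Estar EW : Matrix (Fin n) (Fin n) ℂ)
    (hEstar : ∀ i j, Estar i j = if i = j then 0 else Ystar i j / (dstar j - dstar i))
    (hEW : ∀ i j, EW i j = if i = j then 0 else YW i j / (dt j - dt i)) :
    frob (EW - Estar) ≤ (2 / γ + 4 * frob Ystar / γ ^ 2) * η := by
  have hη0 : 0 ≤ η := hη ▸ frob_nonneg' _
  -- entrywise bound
  have hentry : ∀ i j, ‖(EW - Estar) i j‖ ≤
      (2 / γ) * ‖(YW - Ystar) i j‖ + (4 * η / γ ^ 2) * ‖Ystar i j‖ := by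
    intro i j
    by_cases hij : i = j
    · have h0 : (EW - Estar) i j = 0 := by
        subst hij
        rw [Matrix.sub_apply, hEW i i, hEstar i i, if_pos rfl, if_pos rfl, sub_zero]
      rw [h0, norm_zero]
      have : 0 ≤ (2 / γ) * ‖(YW - Ystar) i j‖ := by positivity
      have : 0 ≤ (4 * η / γ ^ 2) * ‖Ystar i j‖ := by positivity
      linarith
    · set aa : ℂ := dstar j - dstar i with haa
      set bb : ℂ := dt j - dt i with hbb
      have hga : γ ≤ ‖aa‖ := hγ j i (Ne.symm hij)
      have hδeq : bb - aa = (YW - Ystar) j j - (YW - Ystar) i i := by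
        rw [hbb, haa, hdt j, hdt i, hdstar j, hdstar i]
        simp [Matrix.sub_apply]
        ring
      have hδn : ‖bb - aa‖ ≤ 2 * η := by
        rw [hδeq]
        calc ‖(YW - Ystar) j j - (YW - Ystar) i i‖
            ≤ ‖(YW - Ystar) j j‖ + ‖(YW - Ystar) i i‖ := norm_sub_le _ _
          _ ≤ η + η := add_le_add (hη ▸ entry_le_frob _ j j) (hη ▸ entry_le_frob _ i i)
          _ = 2 * η := by ring
      have hbn : γ / 2 ≤ ‖bb‖ := by
        have h1 : ‖aa‖ - ‖bb‖ ≤ ‖aa - bb‖ := norm_sub_norm_le _ _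
        have h2 : ‖aa - bb‖ = ‖bb - aa‖ := norm_sub_rev _ _
        linarith
      have ha0 : aa ≠ 0 := by
        intro h; rw [h, norm_zero] at hga; linarith
      have hb0 : bb ≠ 0 := by
        intro h; rw [h, norm_zero] at hbn; linarith
      have hsplit : (EW - Estar) i j
          = (YW i j - Ystar i j) / bb + Ystar i j * (aa - bb) / (aa * bb) := by
        rw [Matrix.sub_apply, hEW i j, hEstar i j, if_neg hij, if_neg hij, ← haa, ← hbb]
        field_simp
        ring
      have hnorm : ‖(EW - Estar) i j‖
          ≤ ‖(YW - Ystar) i j‖ / ‖bb‖ + ‖Ystar i j‖ * ‖aa - bb‖ / (‖aa‖ * ‖bb‖) := by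
        rw [hsplit]
        calc ‖(YW i j - Ystar i j) / bb + Ystar i j * (aa - bb) / (aa * bb)‖
            ≤ ‖(YW i j - Ystar i j) / bb‖ + ‖Ystar i j * (aa - bb) / (aa * bb)‖ :=
              norm_add_le _ _
          _ = ‖(YW - Ystar) i j‖ / ‖bb‖ + ‖Ystar i j‖ * ‖aa - bb‖ / (‖aa‖ * ‖bb‖) := by
              rw [norm_div, norm_div, norm_mul, norm_mul, Matrix.sub_apply]
      have hb2 : (0:ℝ) < γ / 2 := by linarith
      have t1 : ‖(YW - Ystar) i j‖ / ‖bb‖ ≤ ‖(YW - Ystar) i j‖ / (γ / 2) := by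
        gcongr
      have t2 : ‖Ystar i j‖ * ‖aa - bb‖ / (‖aa‖ * ‖bb‖)
          ≤ ‖Ystar i j‖ * (2 * η) / (γ * (γ / 2)) := by
        have haabb : ‖aa - bb‖ ≤ 2 * η := by rw [norm_sub_rev]; exact hδn
        gcongr
      have e1 : ‖(YW - Ystar) i j‖ / (γ / 2) = (2 / γ) * ‖(YW - Ystar) i j‖ := by
        field_simp
      have e2 : ‖Ystar i j‖ * (2 * η) / (γ * (γ / 2)) = (4 * η / γ ^ 2) * ‖Ystar i j‖ := by
        field_simp
        ring
      rw [e1] at t1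
      rw [e2] at t2
      linarith
  -- combine entrywise bounds into Frobenius bound
  have hfrob : ∀ (M : Matrix (Fin n) (Fin n) ℂ),
      frob M = Real.sqrt (∑ p : Fin n × Fin n, ‖M p.1 p.2‖ ^ 2) := by
    intro M
    rw [frob, Fintype.sum_prod_type]
  have hmain : frob (EW - Estar)
      ≤ (2 / γ) * frob (YW - Ystar) + (4 * η / γ ^ 2) * frob Ystar := by
    have key := l2_comb (fun p : Fin n × Fin n => ‖(EW - Estar) p.1 p.2‖)
      (fun p => ‖(YW - Ystar) p.1 p.2‖) (fun p => ‖Ystar p.1 p.2‖)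
      (2 / γ) (4 * η / γ ^ 2) (by positivity) (by positivity)
      (fun p => by
        rw [abs_of_nonneg (norm_nonneg _), abs_of_nonneg (norm_nonneg _),
          abs_of_nonneg (norm_nonneg _)]
        exact hentry p.1 p.2)
    rw [hfrob (EW - Estar), hfrob (YW - Ystar), hfrob Ystar]
    exact key
  calc frob (EW - Estar)
      ≤ (2 / γ) * frob (YW - Ystar) + (4 * η / γ ^ 2) * frob Ystar := hmain
    _ = (2 / γ + 4 * frob Ystar / γ ^ 2) * η := by rw [← hη]; ring
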